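/- For n ≥ 3, the subset {α ∈ DPS_n : 0 is in the domain of α and 0α = 0} is a submonoid of DPS_n, and it is isomorphic as a monoid to the symmetric inverse monoid on {1,2,...,n−1}, i.e., the monoid under composition of all injective partial maps on a set with n−1 elements. An isomorphism is given by sending an injective partial map ξ on {1,...,n−1} to its extension ξ̄ defined by 0ξ̄ = 0 and ξ̄ agreeing with ξ on the domain of ξ. -/

import Mathlib

namespace DPSPaper

instance instMonoidPFun {V : Type*} : Monoid (V →. V) where
  mul f g := g.comp f
  one := PFun.id V
  mul_assoc a b c := (PFun.comp_assoc c b a).symm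
  one_mul := PFun.comp_id
  mul_one := PFun.id_comp

/-- The geodesic distance in the star graph `S_n` on vertices `{0,1,...,n-1}`. -/
def starDist (n : ℕ) (x y : Fin n) : ℕ :=
  if x = y then 0 else if (x : ℕ) = 0 ∨ (y : ℕ) = 0 then 1 else 2

/-- Injectivity of a partial map. -/
def PInj {n : ℕ} (α : Fin n →. Fin n) : Prop :=
  ∀ ⦃x y a : Fin n⦄, a ∈ α x → a ∈ α y → x = y

/-- `α` is a partial isometry of the star graph `S_n`. -/
def IsStarPI {n : ℕ} (α : Fin n →. Fin n) : Prop :=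
  PInj α ∧ ∀ ⦃x y u v : Fin n⦄, u ∈ α x → v ∈ α y → starDist n u v = starDist n x y

/-- The set of all partial isometries of `S_n`. -/
def DPSset (n : ℕ) : Set (Fin n →. Fin n) := { α | IsStarPI α }

/-- The extension `ξ̄` of a partial map `ξ` on `{1,...,n-1}` (modelled on `Fin (n-1)`,
`i` corresponding to the vertex `i+1`) to `{0,1,...,n-1}`, fixing `0`. -/
def barMap (n : ℕ) (ξ : Fin (n - 1) →. Fin (n - 1)) : Fin n →. Fin n :=
  fun x =>
    if h : (x : ℕ) = 0 then Part.some x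
    else (ξ ⟨(x : ℕ) - 1, by have := x.isLt; omega⟩).map
      (fun j : Fin (n - 1) => ⟨(j : ℕ) + 1, by have := j.isLt; omega⟩)

set_option maxHeartbeats 1000000

section Aux
variable {n : ℕ}

lemma mul_apply' (α β : Fin n →. Fin n) (x : Fin n) : (α * β) x = (α x).bind (fun y => β y) := rfl

lemma one_apply' (x : Fin n) : (1 : Fin n →. Fin n) x = Part.some x := rfl

lemma starDist_congr {u v x y : Fin n} (h1 : u = v ↔ x = y)
    (h2 : (u : ℕ) = 0 ↔ (x : ℕ) = 0) (h3 : (v : ℕ) = 0 ↔ (y : ℕ) = 0) :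
    starDist n u v = starDist n x y := by
  unfold starDist; split_ifs <;> tauto

lemma barMap_apply_zero (ξ : Fin (n - 1) →. Fin (n - 1)) {x : Fin n} (hx : (x : ℕ) = 0) :
    barMap n ξ x = Part.some x := dif_pos hx

lemma mem_barMap_pos {ξ : Fin (n - 1) →. Fin (n - 1)} {x a : Fin n} (hx : (x : ℕ) ≠ 0) :
    a ∈ barMap n ξ x ↔
      ∃ j : Fin (n - 1), j ∈ ξ ⟨(x : ℕ) - 1, by have := x.isLt; omega⟩ ∧ (j : ℕ) + 1 = (a : ℕ) := by
  unfold barMap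
  rw [dif_neg hx, Part.mem_map_iff]
  constructor
  · rintro ⟨j, hj, rfl⟩; exact ⟨j, hj, rfl⟩
  · rintro ⟨j, hj, h⟩; exact ⟨j, hj, Fin.ext h⟩

def emb (n : ℕ) (i : Fin (n - 1)) : Fin n := ⟨(i : ℕ) + 1, by have := i.isLt; omega⟩

def restrictMap (n : ℕ) (α : Fin n →. Fin n) : Fin (n - 1) →. Fin (n - 1) :=
  fun i => ⟨(α (emb n i)).Dom,
    fun h => ⟨((α (emb n i)).get h : ℕ) - 1,
      by have h1 := ((α (emb n i)).get h).isLt; have h2 := i.isLt; omega⟩⟩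

lemma mem_restrictMap {n : ℕ} {α : Fin n →. Fin n} {i : Fin (n - 1)} {a : Fin (n - 1)} :
    a ∈ restrictMap n α i ↔ ∃ y : Fin n, y ∈ α (emb n i) ∧ (y : ℕ) - 1 = (a : ℕ) := by
  rw [restrictMap, Part.mem_mk_iff]
  constructor
  · rintro ⟨h, e⟩
    exact ⟨(α (emb n i)).get h, Part.get_mem h, congrArg Fin.val e⟩
  · rintro ⟨y, hy, e⟩
    obtain ⟨h, hg⟩ := (Part.mem_eq y (α (emb n i))) ▸ hy
    exact ⟨h, Fin.ext (by show ((α (emb n i)).get h : ℕ) - 1 = (a : ℕ); rw [hg]; exact e)⟩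

end Aux

/-- For `n ≥ 3`, `{α ∈ DPS_n : 0 ∈ Dom α and 0α = 0}` is a submonoid of `DPS_n`,
isomorphic to the symmetric inverse monoid on `{1,...,n-1}` via `ξ ↦ ξ̄`. -/
theorem statement5 (n : ℕ) [NeZero n] (hn : 3 ≤ n)
    (S : Set (Fin n →. Fin n))
    (hS : S = { α | IsStarPI α ∧ (0 : Fin n) ∈ α 0 }) :
    (1 : Fin n →. Fin n) ∈ S ∧
    (∀ α β : Fin n →. Fin n, α ∈ S → β ∈ S → α * β ∈ S) ∧
    barMap n 1 = 1 ∧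
    (∀ ξ ζ : Fin (n - 1) →. Fin (n - 1), PInj ξ → PInj ζ →
      barMap n (ξ * ζ) = barMap n ξ * barMap n ζ) ∧
    (∀ ξ ζ : Fin (n - 1) →. Fin (n - 1), PInj ξ → PInj ζ →
      barMap n ξ = barMap n ζ → ξ = ζ) ∧
    S = { α | ∃ ξ : Fin (n - 1) →. Fin (n - 1), PInj ξ ∧ α = barMap n ξ } := by
  subst hS
  refine ⟨?_, ?_, ?_, ?_, ?_, ?_⟩
  · -- 1 ∈ S
    refine ⟨⟨?_, ?_⟩, Part.mem_some 0⟩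
    · intro x y a ha hb
      rw [one_apply', Part.mem_some_iff] at ha hb
      rw [← ha, hb]
    · intro x y u v hu hv
      rw [one_apply', Part.mem_some_iff] at hu hv
      rw [hu, hv]
  · -- closed under mul
    rintro α β ⟨⟨hαi, hαd⟩, hα0⟩ ⟨⟨hβi, hβd⟩, hβ0⟩
    refine ⟨⟨?_, ?_⟩, ?_⟩
    · intro x y a ha hb
      rw [mul_apply', Part.mem_bind_iff] at ha hb
      obtain ⟨w, hw, hw'⟩ := ha
      obtain ⟨w', hw2, hw2'⟩ := hb
      have := hβi hw' hw2'
      subst this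
      exact hαi hw hw2
    · intro x y u v hu hv
      rw [mul_apply', Part.mem_bind_iff] at hu hv
      obtain ⟨w, hw, hw'⟩ := hu
      obtain ⟨w', hw2, hw2'⟩ := hv
      rw [hβd hw' hw2', hαd hw hw2]
    · rw [mul_apply', Part.mem_bind_iff]
      exact ⟨0, hα0, hβ0⟩
  · -- barMap 1 = 1
    funext x
    by_cases hx : (x : ℕ) = 0
    · rw [barMap_apply_zero _ hx, one_apply']
    · apply Part.ext
      intro a
      rw [mem_barMap_pos hx]
      simp only [one_apply', Part.mem_some_iff]
      constructor
      · rintro ⟨j, rfl, hja⟩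
        apply Fin.ext
        simp only [] at hja
        omega
      · rintro rfl
        exact ⟨⟨(a : ℕ) - 1, by have := a.isLt; omega⟩, rfl, by simp; omega⟩
  · -- multiplicative
    intro ξ ζ hξ hζ
    funext x
    by_cases hx : (x : ℕ) = 0
    · rw [mul_apply', barMap_apply_zero _ hx, barMap_apply_zero _ hx, Part.bind_some,
        barMap_apply_zero _ hx]
    · apply Part.ext
      intro a
      rw [mem_barMap_pos hx]
      rw [show a ∈ (barMap n ξ * barMap n ζ) x ↔ ∃ w ∈ barMap n ξ x, a ∈ barMap n ζ w from
        Part.mem_bind_iff]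
      simp only [mul_apply', Part.mem_bind_iff]
      constructor
      · rintro ⟨j, ⟨k, hk, hkj⟩, hja⟩
        refine ⟨⟨(k : ℕ) + 1, by have := k.isLt; omega⟩, ?_, ?_⟩
        · rw [mem_barMap_pos hx]
          exact ⟨k, hk, rfl⟩
        · rw [mem_barMap_pos (by simp)]
          exact ⟨j, hkj, hja⟩
      · rintro ⟨w, hw, haw⟩
        rw [mem_barMap_pos hx] at hw
        obtain ⟨k, hk, hkw⟩ := hw
        have hwne : (w : ℕ) ≠ 0 := by omega
        rw [mem_barMap_pos hwne] at haw
        obtain ⟨j, hj, hja⟩ := haw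
        refine ⟨j, ⟨k, hk, ?_⟩, hja⟩
        have : (⟨(w : ℕ) - 1, by have := w.isLt; omega⟩ : Fin (n - 1)) = k :=
          Fin.ext (by simp; omega)
        rwa [this] at hj
  · -- injective
    intro ξ ζ hξ hζ h
    funext i
    apply Part.ext
    intro a
    have h' := congrFun h (⟨(i : ℕ) + 1, by have := i.isLt; omega⟩ : Fin n)
    have hx : ((⟨(i : ℕ) + 1, by have := i.isLt; omega⟩ : Fin n) : ℕ) ≠ 0 := by simp
    constructor
    · intro ha
      have h1 : (⟨(a : ℕ) + 1, by have := a.isLt; omega⟩ : Fin n) ∈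
          barMap n ξ ⟨(i : ℕ) + 1, by have := i.isLt; omega⟩ := by
        rw [mem_barMap_pos hx]
        exact ⟨a, ha, rfl⟩
      rw [h', mem_barMap_pos hx] at h1
      obtain ⟨j, hj, hja⟩ := h1
      have : j = a := Fin.ext (by simpa using hja)
      subst this
      exact hj
    · intro ha
      have h1 : (⟨(a : ℕ) + 1, by have := a.isLt; omega⟩ : Fin n) ∈
          barMap n ζ ⟨(i : ℕ) + 1, by have := i.isLt; omega⟩ := by
        rw [mem_barMap_pos hx]
        exact ⟨a, ha, rfl⟩
      rw [← h', mem_barMap_pos hx] at h1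
      obtain ⟨j, hj, hja⟩ := h1
      have : j = a := Fin.ext (by simpa using hja)
      subst this
      exact hj
  · -- image characterization
    ext α
    simp only [Set.mem_setOf_eq]
    constructor
    · rintro ⟨⟨hαi, hαd⟩, hα0⟩
      have key : ∀ {x y : Fin n}, y ∈ α x → ((y : ℕ) = 0 ↔ (x : ℕ) = 0) := by
        intro x y hy
        constructor
        · intro h0
          by_contra hne
          have hy0 : y = 0 := Fin.ext (by simpa using h0)
          subst hy0
          have hd := hαd hy hα0
          unfold starDist at hd
          have hx0 : x ≠ 0 := fun h => hne (by simp [h])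
          simp [hx0] at hd
        · intro h0
          have hx0 : x = 0 := Fin.ext (by simpa using h0)
          subst hx0
          have : y = 0 := Part.mem_unique hy hα0
          simp [this]
      have hvne : ∀ {x y : Fin n}, y ∈ α x → (x : ℕ) ≠ 0 → (y : ℕ) ≠ 0 :=
        fun h hx h0 => hx ((key h).mp h0)
      refine ⟨restrictMap n α, ?_, ?_⟩
      · -- PInj
        intro i i' a ha ha'
        rw [mem_restrictMap] at ha ha'
        obtain ⟨y, hy, ey⟩ := ha
        obtain ⟨y', hy', ey'⟩ := ha'
        have hy0 : (y : ℕ) ≠ 0 := hvne hy (by simp [emb])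
        have hy0' : (y' : ℕ) ≠ 0 := hvne hy' (by simp [emb])
        have : y = y' := Fin.ext (by omega)
        subst this
        have := hαi hy hy'
        have hv := congrArg Fin.val this
        simp only [emb] at hv
        exact Fin.ext (by omega)
      · -- α = barMap (restrictMap α)
        funext x
        apply Part.ext
        intro a
        by_cases hx : (x : ℕ) = 0
        · rw [barMap_apply_zero _ hx, Part.mem_some_iff]
          have hx0 : x = 0 := Fin.ext (by simpa using hx)
          subst hx0
          exact ⟨fun h => Part.mem_unique h hα0, fun h => h ▸ hα0⟩
        · rw [mem_barMap_pos hx]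
          have hup : emb n (⟨(x : ℕ) - 1, by have := x.isLt; omega⟩ : Fin (n - 1)) = x :=
            Fin.ext (by simp [emb]; omega)
          constructor
          · intro ha
            have hane : (a : ℕ) ≠ 0 := hvne ha hx
            refine ⟨⟨(a : ℕ) - 1, by have := a.isLt; omega⟩, ?_,
              by show (a : ℕ) - 1 + 1 = (a : ℕ); omega⟩
            rw [mem_restrictMap, hup]
            exact ⟨a, ha, rfl⟩
          · rintro ⟨j, hj, hja⟩
            rw [mem_restrictMap, hup] at hj
            obtain ⟨y, hy, ey⟩ := hj
            have hy0 : (y : ℕ) ≠ 0 := hvne hy hx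
            have : y = a := Fin.ext (by omega)
            exact this ▸ hy
    · rintro ⟨ξ, hξ, rfl⟩
      have key0 : ((0 : Fin n) : ℕ) = 0 := Fin.val_zero n
      have hmem0 : (0 : Fin n) ∈ barMap n ξ 0 := by
        rw [barMap_apply_zero _ key0]; exact Part.mem_some _
      have keyz : ∀ {x u : Fin n}, u ∈ barMap n ξ x → ((u : ℕ) = 0 ↔ (x : ℕ) = 0) := by
        intro x u hu
        by_cases hx : (x : ℕ) = 0
        · rw [barMap_apply_zero _ hx, Part.mem_some_iff] at hu
          subst hu; simp [hx]
        · rw [mem_barMap_pos hx] at hu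
          obtain ⟨j, hj, hja⟩ := hu
          constructor
          · intro h; omega
          · intro h; exact absurd h hx
      have keyinj : ∀ {x y u : Fin n}, u ∈ barMap n ξ x → u ∈ barMap n ξ y → x = y := by
        intro x y u hux huy
        by_cases hx : (x : ℕ) = 0 <;> by_cases hy : (y : ℕ) = 0
        · exact Fin.ext (hx.trans hy.symm)
        · exfalso
          rw [barMap_apply_zero _ hx, Part.mem_some_iff] at hux
          rw [mem_barMap_pos hy] at huy
          obtain ⟨j, hj, hja⟩ := huy
          subst hux; omega
        · exfalso
          rw [barMap_apply_zero _ hy, Part.mem_some_iff] at huy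
          rw [mem_barMap_pos hx] at hux
          obtain ⟨j, hj, hja⟩ := hux
          subst huy; omega
        · rw [mem_barMap_pos hx] at hux
          rw [mem_barMap_pos hy] at huy
          obtain ⟨j, hj, hja⟩ := hux
          obtain ⟨k, hk, hka⟩ := huy
          have : j = k := Fin.ext (by omega)
          subst this
          have := hξ hj hk
          have hv := congrArg Fin.val this
          simp only [] at hv
          exact Fin.ext (by omega)
      refine ⟨⟨fun x y u hux huy => keyinj hux huy, ?_⟩, hmem0⟩
      intro x y u v hu hv
      refine starDist_congr ?_ (keyz hu) (keyz hv)
      constructor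
      · intro h; subst h; exact keyinj hu hv
      · intro h; subst h; exact Part.mem_unique hu hv


end DPSPaper
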